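/- Consider the deterministic coupled map lattice Ξ_{n+1}(x) = φ_μ(δ_R(x;Ξ_n)) on [0,1/e]^{ℤ^d} with μ ∈ (1, e²). Let ψ(w) = min(aw, b) with a > 1, b > 0 be such that ψ ≤ φ_μ on [0,1]. Then for all n ∈ ℕ and z ∈ ℤ^d, Ξ_n(z) ≥ Σ_{y∈ℤ^d} p^{(n)}(z,y)·min(a^n Ξ₀(y), b), where p^{(n)} is the n-step transition kernel of the random walk with uniform steps on B_R(0). -/
import Mathlib


/-- `d`-dimensional local density `δ_R(x;Ξ) = V_R^{-d} Σ_{y ∈ B_R(x)} Ξ(y)`. -/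
noncomputable def dens (d R : ℕ) (η : (Fin d → ℤ) → ℝ) (x : Fin d → ℤ) : ℝ :=
  ((2 * R + 1 : ℝ) ^ d)⁻¹ *
    ∑ y ∈ Finset.Icc (fun i => x i - (R : ℤ)) (fun i => x i + (R : ℤ)), η y

/-- `φ_μ(w) = μ w e^{-μ w}`. -/
noncomputable def phi (μ w : ℝ) : ℝ := μ * w * Real.exp (-(μ * w))

lemma phi_mem (μ w : ℝ) (hμ : 0 < μ) (hw : 0 ≤ w) : phi μ w ∈ Set.Icc 0 (Real.exp 1)⁻¹ := by
  unfold phi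
  constructor
  · positivity
  · set t := μ * w with ht
    have ht0 : 0 ≤ t := by positivity
    have h1 : t ≤ Real.exp (t - 1) := by
      have := Real.add_one_le_exp (t - 1); linarith
    calc t * Real.exp (-t) ≤ Real.exp (t-1) * Real.exp (-t) :=
            mul_le_mul_of_nonneg_right h1 (Real.exp_nonneg _)
      _ = (Real.exp 1)⁻¹ := by
            rw [← Real.exp_add, ← Real.exp_neg]; ring_nf

lemma card_box (d R : ℕ) (z : Fin d → ℤ) :
    ((Finset.Icc (fun i => z i - (R:ℤ)) (fun i => z i + (R:ℤ))).card : ℝ) = (2*R+1:ℝ)^d := by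
  rw [Pi.card_Icc]
  have : ∀ i : Fin d, (Finset.Icc (z i - (R:ℤ)) (z i + (R:ℤ))).card = 2*R+1 := by
    intro i; rw [Int.card_Icc]; omega
  simp [this]

lemma card_box0 (d R : ℕ) :
    ((Finset.Icc (fun _ : Fin d => -(R:ℤ)) (fun _ => (R:ℤ))).card : ℝ) = (2*R+1:ℝ)^d := by
  rw [Pi.card_Icc]
  have h : ∀ i : Fin d,
      (Finset.Icc ((fun _ : Fin d => -(R:ℤ)) i) ((fun _ : Fin d => (R:ℤ)) i)).card = 2*R+1 :=
    fun i => by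
      show (Finset.Icc (-(R:ℤ)) (R:ℤ)).card = 2*R+1
      rw [Int.card_Icc]; omega
  rw [Finset.prod_congr rfl fun i _ => h i, Finset.prod_const, Finset.card_univ,
    Fintype.card_fin]
  push_cast
  ring

lemma sum_box_translate (d R : ℕ) (z : Fin d → ℤ) (f : (Fin d → ℤ) → ℝ) :
    ∑ x ∈ Finset.Icc (fun _ => -(R:ℤ)) (fun _ => (R:ℤ)), f (z + x)
      = ∑ y ∈ Finset.Icc (fun i => z i - (R:ℤ)) (fun i => z i + (R:ℤ)), f y := by
  have h : (Finset.Icc (fun i => z i - (R:ℤ)) (fun i => z i + (R:ℤ)))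
      = Finset.map (addLeftEmbedding z) (Finset.Icc (fun _ => -(R:ℤ)) (fun _ => (R:ℤ))) := by
    rw [Finset.map_add_left_Icc]
    congr 1
  rw [h, Finset.sum_map]
  rfl

/-- Lower bound for the coupled map lattice `Ξ_{n+1}(x) = φ_μ(δ_R(x;Ξ_n))` on
`[0,1/e]^{ℤ^d}` with `μ ∈ (1,e²)`: if `ψ(w) = min(aw, b)` with `a > 1`, `b > 0`
satisfies `ψ ≤ φ_μ` on `[0,1]`, then
`Ξ_n(z) ≥ Σ_y p^{(n)}(z,y)·min(a^n Ξ₀(y), b)`, where `p^{(n)}` is the `n`-step kernel of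
the random walk with uniform steps on `B_R(0)`. -/
theorem stmt18 (d R : ℕ) (μ a b : ℝ) (hμ1 : 1 < μ) (hμ2 : μ < Real.exp 2)
    (ha : 1 < a) (hb : 0 < b)
    (hψle : ∀ w ∈ Set.Icc (0 : ℝ) 1, min (a * w) b ≤ phi μ w)
    (Ξ : ℕ → (Fin d → ℤ) → ℝ)
    (hΞ0 : ∀ x, Ξ 0 x ∈ Set.Icc (0 : ℝ) (Real.exp 1)⁻¹)
    (hΞ : ∀ n x, Ξ (n + 1) x = phi μ (dens d R (Ξ n) x))
    (p : ℕ → (Fin d → ℤ) → (Fin d → ℤ) → ℝ)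
    (hp0 : ∀ z y, p 0 z y = if z = y then 1 else 0)
    (hps : ∀ n z y, p (n + 1) z y =
      ((2 * R + 1 : ℝ) ^ d)⁻¹ *
        ∑ x ∈ Finset.Icc (fun _ => -(R : ℤ)) (fun _ => (R : ℤ)), p n (z + x) y) :
    ∀ (n : ℕ) (z : Fin d → ℤ),
      (∑' y : Fin d → ℤ, p n z y * min (a ^ n * Ξ 0 y) b) ≤ Ξ n z := by
  set V : ℝ := (2*R+1:ℝ)^d with hVdef
  have hV : 0 < V := by positivity
  set B0 : Finset (Fin d → ℤ) := Finset.Icc (fun _ => -(R:ℤ)) (fun _ => (R:ℤ)) with hB0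
  have hcard0 : (B0.card : ℝ) = V := card_box0 d R
  -- Ξ stays in [0, e⁻¹]
  have hmem : ∀ n x, Ξ n x ∈ Set.Icc (0:ℝ) (Real.exp 1)⁻¹ := by
    intro n
    induction n with
    | zero => exact hΞ0
    | succ n ih =>
      intro x
      rw [hΞ]
      apply phi_mem _ _ (by linarith)
      unfold dens
      apply mul_nonneg (by positivity)
      exact Finset.sum_nonneg fun y _ => (ih y).1
  have hdens : ∀ n x, dens d R (Ξ n) x ∈ Set.Icc (0:ℝ) 1 := by
    intro n x
    have hi : (Real.exp 1)⁻¹ ≤ 1 := by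
      rw [inv_le_one_iff₀]; right
      have := Real.add_one_le_exp (1:ℝ); linarith
    constructor
    · unfold dens
      apply mul_nonneg (by positivity)
      exact Finset.sum_nonneg fun y _ => (hmem n y).1
    · unfold dens
      calc ((2*R+1:ℝ)^d)⁻¹ * ∑ y ∈ Finset.Icc (fun i => x i - (R:ℤ)) (fun i => x i + (R:ℤ)), Ξ n y
          ≤ ((2*R+1:ℝ)^d)⁻¹ * ∑ y ∈ Finset.Icc (fun i => x i - (R:ℤ)) (fun i => x i + (R:ℤ)), (Real.exp 1)⁻¹ := by
            apply mul_le_mul_of_nonneg_left _ (by positivity)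
            exact Finset.sum_le_sum fun y _ => (hmem n y).2
        _ = ((2*R+1:ℝ)^d)⁻¹ * ((2*R+1:ℝ)^d * (Real.exp 1)⁻¹) := by
            rw [Finset.sum_const, nsmul_eq_mul, card_box]
        _ = (Real.exp 1)⁻¹ := by field_simp
        _ ≤ 1 := hi
  -- p nonneg
  have hpnn : ∀ n z y, 0 ≤ p n z y := by
    intro n
    induction n with
    | zero => intro z y; rw [hp0]; split <;> norm_num
    | succ n ih =>
      intro z y
      rw [hps]
      exact mul_nonneg (by positivity) (Finset.sum_nonneg fun x _ => ih _ _)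
  -- p is a probability kernel
  have hsum : ∀ n z, HasSum (p n z) 1 := by
    intro n
    induction n with
    | zero =>
      intro z
      have he : p 0 z = fun y => if y = z then 1 else 0 := by
        funext y; rw [hp0]; simp [eq_comm]
      rw [he]
      exact hasSum_ite_eq z 1
    | succ n ih =>
      intro z
      have he : p (n+1) z = fun y => V⁻¹ * ∑ x ∈ B0, p n (z + x) y := by
        funext y; rw [hps]
      rw [he]
      have h1 : HasSum (fun y => ∑ x ∈ B0, p n (z + x) y) (∑ x ∈ B0, (1:ℝ)) :=
        hasSum_sum fun x _ => ih (z + x)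
      have := h1.mul_left V⁻¹
      simpa [Finset.sum_const, hcard0, inv_mul_cancel₀ hV.ne'] using this
  -- summability of p * bounded nonneg function
  have hSgen : ∀ (n : ℕ) (w : Fin d → ℤ) (C : ℝ) (g : (Fin d → ℤ) → ℝ),
      (∀ y, 0 ≤ g y) → (∀ y, g y ≤ C) → Summable (fun y => p n w y * g y) := by
    intro n w C g hg0 hgC
    apply Summable.of_nonneg_of_le (fun y => mul_nonneg (hpnn n w y) (hg0 y))
      (fun y => mul_le_mul_of_nonneg_left (hgC y) (hpnn n w y))
    exact (hsum n w).summable.mul_right C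
  have hm0 : ∀ (n : ℕ) (y), 0 ≤ min (a ^ n * Ξ 0 y) b :=
    fun n y => le_min (mul_nonneg (by positivity) (hΞ0 y).1) hb.le
  have hmb : ∀ (n : ℕ) (y), min (a ^ n * Ξ 0 y) b ≤ b := fun n y => min_le_right _ _
  -- main induction
  intro n
  induction n with
  | zero =>
    intro z
    have h0 : (∑' y, p 0 z y * min (a ^ 0 * Ξ 0 y) b)
        = p 0 z z * min (a ^ 0 * Ξ 0 z) b :=
      tsum_eq_single z (fun y hy => by rw [hp0, if_neg (Ne.symm hy), zero_mul])
    rw [h0, hp0, if_pos rfl, pow_zero, one_mul, one_mul]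
    exact min_le_left _ _
  | succ n ih =>
    intro z
    have hmm : ∀ y, min (a ^ (n+1) * Ξ 0 y) b ≤ a * min (a ^ n * Ξ 0 y) b := by
      intro y
      rcases le_total (a ^ n * Ξ 0 y) b with h | h
      · rw [min_eq_left h]
        calc min (a ^ (n+1) * Ξ 0 y) b ≤ a ^ (n+1) * Ξ 0 y := min_le_left _ _
          _ = a * (a ^ n * Ξ 0 y) := by ring
      · rw [min_eq_right h]
        exact (min_le_right _ _).trans (le_mul_of_one_le_left hb.le ha.le)
    have hstep1 : ∀ w : Fin d → ℤ,
        (∑' y, p n w y * min (a ^ (n+1) * Ξ 0 y) b) ≤ min (a * Ξ n w) b := by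
      intro w
      apply le_min
      · have hpt : ∀ y, p n w y * min (a ^ (n+1) * Ξ 0 y) b
            ≤ a * (p n w y * min (a ^ n * Ξ 0 y) b) := by
          intro y
          calc p n w y * min (a ^ (n+1) * Ξ 0 y) b
              ≤ p n w y * (a * min (a ^ n * Ξ 0 y) b) :=
                mul_le_mul_of_nonneg_left (hmm y) (hpnn n w y)
            _ = a * (p n w y * min (a ^ n * Ξ 0 y) b) := by ring
        calc (∑' y, p n w y * min (a ^ (n+1) * Ξ 0 y) b)
            ≤ ∑' y, a * (p n w y * min (a ^ n * Ξ 0 y) b) := by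
              apply Summable.tsum_le_tsum hpt
              · exact hSgen n w b _ (hm0 (n+1)) (hmb (n+1))
              · exact (hSgen n w b _ (hm0 n) (hmb n)).mul_left a
          _ = a * ∑' y, p n w y * min (a ^ n * Ξ 0 y) b := tsum_mul_left
          _ ≤ a * Ξ n w := mul_le_mul_of_nonneg_left (ih w) (by linarith)
      · calc (∑' y, p n w y * min (a ^ (n+1) * Ξ 0 y) b)
            ≤ ∑' y, p n w y * b := by
              apply Summable.tsum_le_tsum
                (fun y => mul_le_mul_of_nonneg_left (hmb (n+1) y) (hpnn n w y))
              · exact hSgen n w b _ (hm0 (n+1)) (hmb (n+1))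
              · exact (hsum n w).summable.mul_right b
          _ = (∑' y, p n w y) * b := tsum_mul_right
          _ = b := by rw [(hsum n w).tsum_eq, one_mul]
    have hrw : (∑' y, p (n+1) z y * min (a ^ (n+1) * Ξ 0 y) b)
        = V⁻¹ * ∑ x ∈ B0, ∑' y, p n (z + x) y * min (a ^ (n+1) * Ξ 0 y) b := by
      have h1 : ∀ y, p (n+1) z y * min (a ^ (n+1) * Ξ 0 y) b
          = V⁻¹ * ∑ x ∈ B0, p n (z + x) y * min (a ^ (n+1) * Ξ 0 y) b := by
        intro y
        rw [hps, mul_assoc, Finset.sum_mul]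
      calc (∑' y, p (n+1) z y * min (a ^ (n+1) * Ξ 0 y) b)
          = ∑' y, V⁻¹ * ∑ x ∈ B0, p n (z + x) y * min (a ^ (n+1) * Ξ 0 y) b :=
            tsum_congr h1
        _ = V⁻¹ * ∑' y, ∑ x ∈ B0, p n (z + x) y * min (a ^ (n+1) * Ξ 0 y) b :=
            tsum_mul_left
        _ = V⁻¹ * ∑ x ∈ B0, ∑' y, p n (z + x) y * min (a ^ (n+1) * Ξ 0 y) b := by
            rw [Summable.tsum_finsetSum fun x _ => hSgen n (z+x) b _ (hm0 (n+1)) (hmb (n+1))]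
    rw [hrw]
    have hδ := hdens n z
    calc V⁻¹ * ∑ x ∈ B0, ∑' y, p n (z + x) y * min (a ^ (n+1) * Ξ 0 y) b
        ≤ V⁻¹ * ∑ x ∈ B0, min (a * Ξ n (z + x)) b := by
          apply mul_le_mul_of_nonneg_left _ (by positivity)
          exact Finset.sum_le_sum fun x _ => hstep1 (z + x)
      _ ≤ min (a * dens d R (Ξ n) z) b := by
          apply le_min
          · calc V⁻¹ * ∑ x ∈ B0, min (a * Ξ n (z + x)) b
                ≤ V⁻¹ * ∑ x ∈ B0, a * Ξ n (z + x) := by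
                  apply mul_le_mul_of_nonneg_left _ (by positivity)
                  exact Finset.sum_le_sum fun x _ => min_le_left _ _
              _ = a * dens d R (Ξ n) z := by
                  rw [sum_box_translate d R z (fun y => a * Ξ n y)]
                  unfold dens
                  rw [← Finset.mul_sum]
                  ring
          · calc V⁻¹ * ∑ x ∈ B0, min (a * Ξ n (z + x)) b
                ≤ V⁻¹ * ∑ x ∈ B0, b := by
                  apply mul_le_mul_of_nonneg_left _ (by positivity)
                  exact Finset.sum_le_sum fun x _ => min_le_right _ _
              _ = b := by
                  rw [Finset.sum_const, nsmul_eq_mul, hcard0, ← mul_assoc,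
                    inv_mul_cancel₀ hV.ne', one_mul]
      _ ≤ phi μ (dens d R (Ξ n) z) := hψle _ hδ
      _ = Ξ (n+1) z := (hΞ n z).symm
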